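/- Let V be a finite set, let μ be a fully supported probability measure on Ω = {−1,+1}^V, and let c : V × Ω → (0,∞) be flipping rates satisfying the reversibility condition c(x,σ) μ(σ) = c(x,σˣ) μ(σˣ) for all x, σ. Suppose μ satisfies the log-Sobolev inequality with constant γ > 0, i.e. Ent_μ(F) ≤ (2/γ) D(√F) for every F ≥ 0. Then for every nonnegative F : Ω → ℝ₊ and every t ≥ 0, the entropy decays exponentially along the Glauber semigroup: Ent_μ(P_t F) ≤ e^{−γ t} Ent_μ(F). -/

import Mathlib

open Finset

/-- Flip the spin of `σ` at site `x`. -/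
def flipC {V : Type*} [DecidableEq V] (σ : V → Bool) (x : V) : V → Bool :=
  Function.update σ x (!σ x)

/-- The ±1 spin value of `σ` at site `x`. -/
def spinC {V : Type*} (σ : V → Bool) (x : V) : ℝ := if σ x then 1 else -1

/-- Expectation of `F` under the (discrete, not necessarily normalized) measure `μ`. -/
def Emean {V : Type*} [Fintype V] [DecidableEq V] (μ F : (V → Bool) → ℝ) : ℝ :=
  ∑ σ, μ σ * F σ

/-- The Glauber generator with flipping rates `c`. -/
def gen {V : Type*} [Fintype V] [DecidableEq V] (c : V → (V → Bool) → ℝ)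
    (F : (V → Bool) → ℝ) : (V → Bool) → ℝ :=
  fun σ => ∑ x, c x σ * (F (flipC σ x) - F σ)

/-- The Dirichlet form `D(F) = -E_μ[F ⬝ 𝓛F]`. -/
def dirichlet {V : Type*} [Fintype V] [DecidableEq V] (μ : (V → Bool) → ℝ)
    (c : V → (V → Bool) → ℝ) (F : (V → Bool) → ℝ) : ℝ :=
  - Emean μ (fun σ => F σ * gen c F σ)

/-- Entropy `Ent_μ(F) = E_μ[F log F] − E_μ[F] log E_μ[F]` (note `0 log 0 = 0` in Lean). -/
noncomputable def entropy {V : Type*} [Fintype V] [DecidableEq V] (μ F : (V → Bool) → ℝ) : ℝ :=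
  Emean μ (fun σ => F σ * Real.log (F σ)) - Emean μ F * Real.log (Emean μ F)

/-- Covariance under `μ`. -/
def covar {V : Type*} [Fintype V] [DecidableEq V] (μ F G : (V → Bool) → ℝ) : ℝ :=
  Emean μ (fun σ => F σ * G σ) - Emean μ F * Emean μ G

/-- Variance under `μ`. -/
def varM {V : Type*} [Fintype V] [DecidableEq V] (μ F : (V → Bool) → ℝ) : ℝ :=
  covar μ F F

/-- The Glauber generator as a linear map. -/
def genL {V : Type*} [Fintype V] [DecidableEq V] (c : V → (V → Bool) → ℝ) :
    ((V → Bool) → ℝ) →ₗ[ℝ] ((V → Bool) → ℝ) where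
  toFun := gen c
  map_add' F G := by
    funext σ
    simp only [gen, Pi.add_apply, ← Finset.sum_add_distrib]
    exact Finset.sum_congr rfl fun x _ => by ring
  map_smul' a F := by
    funext σ
    simp only [gen, Pi.smul_apply, smul_eq_mul, RingHom.id_apply, Finset.mul_sum]
    exact Finset.sum_congr rfl fun x _ => by ring

/-- The Glauber generator as a continuous linear map. -/
noncomputable def genCLM {V : Type*} [Fintype V] [DecidableEq V] (c : V → (V → Bool) → ℝ) :
    ((V → Bool) → ℝ) →L[ℝ] ((V → Bool) → ℝ) :=
  LinearMap.toContinuousLinearMap (genL c)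

/-- The Glauber semigroup `P_t = exp (t 𝓛)`. -/
noncomputable def heatSG {V : Type*} [Fintype V] [DecidableEq V] (c : V → (V → Bool) → ℝ)
    (t : ℝ) : ((V → Bool) → ℝ) →L[ℝ] ((V → Bool) → ℝ) :=
  NormedSpace.exp (t • genCLM c)

set_option linter.unusedSectionVars false

section EntropyDecayAux
variable {V : Type*} [Fintype V] [DecidableEq V]

lemma flipC_flipC (σ : V → Bool) (x : V) : flipC (flipC σ x) x = σ := by
  funext y
  by_cases h : y = x
  · subst h; simp [flipC]
  · simp [flipC, Function.update_apply, h]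

lemma sum_flip (x : V) (H : (V → Bool) → ℝ) : ∑ σ, H (flipC σ x) = ∑ σ, H σ :=
  Fintype.sum_bijective (fun σ => flipC σ x)
    (Function.Involutive.bijective (fun σ => flipC_flipC σ x)) _ _ (fun _ => rfl)

lemma sum_rev (μ : (V → Bool) → ℝ) (c : V → (V → Bool) → ℝ)
    (hrev : ∀ x σ, c x σ * μ σ = c x (flipC σ x) * μ (flipC σ x)) (x : V)
    (G : (V → Bool) → ℝ) :
    ∑ σ, μ σ * c x σ * G σ = ∑ σ, μ σ * c x σ * G (flipC σ x) := by
  rw [← sum_flip x (fun σ => μ σ * c x σ * G σ)]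
  refine Finset.sum_congr rfl fun σ _ => ?_
  have : μ (flipC σ x) * c x (flipC σ x) = μ σ * c x σ := by linarith [hrev x σ]
  rw [this]

lemma sum_symmetrize (μ : (V → Bool) → ℝ) (c : V → (V → Bool) → ℝ)
    (hrev : ∀ x σ, c x σ * μ σ = c x (flipC σ x) * μ (flipC σ x)) (x : V)
    (G : (V → Bool) → ℝ) :
    ∑ σ, μ σ * c x σ * G σ
      = (1/2) * ∑ σ, μ σ * c x σ * (G σ + G (flipC σ x)) := by
  have h := sum_rev μ c hrev x G
  have h2 : ∑ σ, μ σ * c x σ * (G σ + G (flipC σ x))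
      = (∑ σ, μ σ * c x σ * G σ) + ∑ σ, μ σ * c x σ * G (flipC σ x) := by
    rw [← Finset.sum_add_distrib]; exact Finset.sum_congr rfl fun σ _ => by ring
  rw [h2, ← h]; ring

lemma Emean_swap (μ : (V → Bool) → ℝ) (c : V → (V → Bool) → ℝ)
    (G : V → (V → Bool) → ℝ) :
    Emean μ (fun σ => ∑ x, c x σ * G x σ) = ∑ x, ∑ σ, μ σ * c x σ * G x σ := by
  unfold Emean
  rw [Finset.sum_comm]
  exact Finset.sum_congr rfl fun σ _ => by rw [Finset.mul_sum]; exact Finset.sum_congr rfl fun x _ => by ring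

lemma Emean_gen_eq_zero (μ : (V → Bool) → ℝ) (c : V → (V → Bool) → ℝ)
    (hrev : ∀ x σ, c x σ * μ σ = c x (flipC σ x) * μ (flipC σ x))
    (G : (V → Bool) → ℝ) : Emean μ (gen c G) = 0 := by
  have h : Emean μ (gen c G) = ∑ x, ∑ σ, μ σ * c x σ * (G (flipC σ x) - G σ) :=
    Emean_swap μ c (fun x σ => G (flipC σ x) - G σ)
  rw [h]
  refine Finset.sum_eq_zero fun x _ => ?_
  rw [sum_symmetrize μ c hrev x]
  have : ∀ σ, μ σ * c x σ * ((G (flipC σ x) - G σ) + (G (flipC (flipC σ x) x) - G (flipC σ x))) = 0 := by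
    intro σ; rw [flipC_flipC]; ring
  rw [Finset.sum_congr rfl fun σ _ => this σ]
  simp

lemma dirichlet_eq (μ : (V → Bool) → ℝ) (c : V → (V → Bool) → ℝ)
    (hrev : ∀ x σ, c x σ * μ σ = c x (flipC σ x) * μ (flipC σ x))
    (h : (V → Bool) → ℝ) :
    dirichlet μ c h = (1/2) * ∑ x, ∑ σ, μ σ * c x σ * (h (flipC σ x) - h σ)^2 := by
  unfold dirichlet
  have h1 : Emean μ (fun σ => h σ * gen c h σ)
      = ∑ x, ∑ σ, μ σ * c x σ * (h σ * (h (flipC σ x) - h σ)) := by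
    have := Emean_swap μ c (fun x σ => h σ * (h (flipC σ x) - h σ))
    rw [← this]
    unfold Emean gen
    refine Finset.sum_congr rfl fun σ _ => ?_
    simp only [Finset.mul_sum]
    exact Finset.sum_congr rfl fun x _ => by ring
  have h2 : ∀ x, ∑ σ, μ σ * c x σ * (h σ * (h (flipC σ x) - h σ))
      = -((1/2) * ∑ σ, μ σ * c x σ * (h (flipC σ x) - h σ)^2) := by
    intro x
    rw [sum_symmetrize μ c hrev x]
    have key : ∀ σ, μ σ * c x σ * ((fun σ => h σ * (h (flipC σ x) - h σ)) σ
        + (fun σ => h σ * (h (flipC σ x) - h σ)) (flipC σ x))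
        = -(μ σ * c x σ * (h (flipC σ x) - h σ)^2) := fun σ => by
      simp only [flipC_flipC]; ring
    rw [Finset.sum_congr rfl fun σ _ => key σ, Finset.sum_neg_distrib]
    ring
  rw [h1, Finset.sum_congr rfl fun x _ => h2 x]
  simp only [Finset.sum_neg_distrib, neg_neg, Finset.mul_sum]

lemma sqrt_sq_le_mul_log_core {a b : ℝ} (ha : 0 < a) (hab : a ≤ b) :
    2 * (Real.sqrt b - Real.sqrt a)^2 ≤ (b - a) * (Real.log b - Real.log a) := by
  have hb : 0 < b := lt_of_lt_of_le ha hab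
  set u := Real.sqrt a with hu_def
  set v := Real.sqrt b with hv_def
  have hu : 0 < u := Real.sqrt_pos.2 ha
  have hv : 0 < v := Real.sqrt_pos.2 hb
  have huv : u ≤ v := Real.sqrt_le_sqrt hab
  have hlog : (v - u)/v ≤ Real.log v - Real.log u := by
    have h1 : Real.log (u/v) ≤ u/v - 1 := Real.log_le_sub_one_of_pos (div_pos hu hv)
    rw [Real.log_div hu.ne' hv.ne'] at h1
    have h2 : (v - u)/v = 1 - u/v := by field_simp
    linarith
  have hL : 0 ≤ Real.log v - Real.log u :=
    le_trans (div_nonneg (sub_nonneg.2 huv) hv.le) hlog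
  have h3 : v - u ≤ v * (Real.log v - Real.log u) := by
    rw [div_le_iff₀ hv] at hlog; linarith
  have ha2 : a = u^2 := (Real.sq_sqrt ha.le).symm
  have hb2 : b = v^2 := (Real.sq_sqrt hb.le).symm
  have hlogab : Real.log b - Real.log a = 2*(Real.log v - Real.log u) := by
    rw [ha2, hb2, Real.log_pow, Real.log_pow]; push_cast; ring
  rw [hlogab, hb2, ha2]
  nlinarith [mul_le_mul_of_nonneg_left h3 (sub_nonneg.2 huv),
    mul_nonneg (sub_nonneg.2 huv) (mul_nonneg hu.le hL)]

lemma sqrt_sq_le_mul_log {a b : ℝ} (ha : 0 < a) (hb : 0 < b) :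
    2 * (Real.sqrt b - Real.sqrt a)^2 ≤ (b - a) * (Real.log b - Real.log a) := by
  rcases le_total a b with hab | hab
  · exact sqrt_sq_le_mul_log_core ha hab
  · have h := sqrt_sq_le_mul_log_core hb hab
    calc 2 * (Real.sqrt b - Real.sqrt a)^2 = 2 * (Real.sqrt a - Real.sqrt b)^2 := by ring
      _ ≤ (a - b) * (Real.log a - Real.log b) := h
      _ = (b - a) * (Real.log b - Real.log a) := by ring

lemma gen_mul_log_le (μ : (V → Bool) → ℝ) (c : V → (V → Bool) → ℝ)
    (hμpos : ∀ σ, 0 < μ σ) (hcpos : ∀ x σ, 0 < c x σ)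
    (hrev : ∀ x σ, c x σ * μ σ = c x (flipC σ x) * μ (flipC σ x))
    (f : (V → Bool) → ℝ) (hf : ∀ σ, 0 < f σ) :
    Emean μ (fun σ => gen c f σ * Real.log (f σ))
      ≤ -2 * dirichlet μ c (fun σ => Real.sqrt (f σ)) := by
  have h1 : Emean μ (fun σ => gen c f σ * Real.log (f σ))
      = ∑ x, ∑ σ, μ σ * c x σ * ((f (flipC σ x) - f σ) * Real.log (f σ)) := by
    have := Emean_swap μ c (fun x σ => (f (flipC σ x) - f σ) * Real.log (f σ))
    rw [← this]
    unfold Emean gen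
    refine Finset.sum_congr rfl fun σ _ => ?_
    simp only [Finset.sum_mul, Finset.mul_sum]
    exact Finset.sum_congr rfl fun x _ => by ring
  rw [h1, dirichlet_eq μ c hrev]
  have h2 : ∀ x, ∑ σ, μ σ * c x σ * ((f (flipC σ x) - f σ) * Real.log (f σ))
      ≤ -∑ σ, μ σ * c x σ * (Real.sqrt (f (flipC σ x)) - Real.sqrt (f σ))^2 := by
    intro x
    rw [sum_symmetrize μ c hrev x, ← Finset.sum_neg_distrib]
    have hhalf : ∀ σ ∈ Finset.univ, (1/2 : ℝ) * (μ σ * c x σ *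
        ((fun σ => (f (flipC σ x) - f σ) * Real.log (f σ)) σ
          + (fun σ => (f (flipC σ x) - f σ) * Real.log (f σ)) (flipC σ x)))
        ≤ -(μ σ * c x σ * (Real.sqrt (f (flipC σ x)) - Real.sqrt (f σ))^2) := by
      intro σ _
      simp only [flipC_flipC]
      have hkey := sqrt_sq_le_mul_log (hf σ) (hf (flipC σ x))
      have hmc : 0 ≤ μ σ * c x σ := le_of_lt (mul_pos (hμpos σ) (hcpos x σ))
      nlinarith [mul_le_mul_of_nonneg_left hkey hmc]
    calc (1/2 : ℝ) * ∑ σ, μ σ * c x σ *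
        ((fun σ => (f (flipC σ x) - f σ) * Real.log (f σ)) σ
          + (fun σ => (f (flipC σ x) - f σ) * Real.log (f σ)) (flipC σ x))
        = ∑ σ, (1/2 : ℝ) * (μ σ * c x σ *
        ((fun σ => (f (flipC σ x) - f σ) * Real.log (f σ)) σ
          + (fun σ => (f (flipC σ x) - f σ) * Real.log (f σ)) (flipC σ x))) := by
          rw [Finset.mul_sum]
      _ ≤ ∑ σ, -(μ σ * c x σ * (Real.sqrt (f (flipC σ x)) - Real.sqrt (f σ))^2) :=
          Finset.sum_le_sum hhalf
  calc ∑ x, ∑ σ, μ σ * c x σ * ((f (flipC σ x) - f σ) * Real.log (f σ))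
      ≤ ∑ x, -∑ σ, μ σ * c x σ * (Real.sqrt (f (flipC σ x)) - Real.sqrt (f σ))^2 :=
        Finset.sum_le_sum fun x _ => h2 x
    _ = -2 * ((1/2) * ∑ x, ∑ σ, μ σ * c x σ * (Real.sqrt (f (flipC σ x)) - Real.sqrt (f σ))^2) := by
        rw [Finset.sum_neg_distrib]; ring



lemma genCLM_apply (c : V → (V → Bool) → ℝ) (F : (V → Bool) → ℝ) : genCLM c F = gen c F := rfl

lemma exp_clm_apply (A : ((V → Bool) → ℝ) →L[ℝ] ((V → Bool) → ℝ)) (G : (V → Bool) → ℝ)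
    (σ : V → Bool) :
    NormedSpace.exp A G σ = ∑' n : ℕ, ((n.factorial : ℝ))⁻¹ * ((A^n) G σ) := by
  have hs := NormedSpace.expSeries_summable' (𝕂 := ℝ) A
  let Ψ : (((V → Bool) → ℝ) →L[ℝ] ((V → Bool) → ℝ)) →L[ℝ] ℝ :=
    (ContinuousLinearMap.proj σ).comp (ContinuousLinearMap.apply ℝ ((V → Bool) → ℝ) G)
  have hΨ : ∀ T : ((V → Bool) → ℝ) →L[ℝ] ((V → Bool) → ℝ), Ψ T = T G σ := fun T => rfl
  have h1 : NormedSpace.exp A G σ = Ψ (NormedSpace.exp A) := rfl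
  rw [h1, NormedSpace.exp_eq_tsum ℝ, Ψ.map_tsum hs]
  refine tsum_congr fun n => ?_
  rw [map_smul]
  simp [hΨ]

lemma exp_clm_nonneg (A : ((V → Bool) → ℝ) →L[ℝ] ((V → Bool) → ℝ))
    (hA : ∀ G : (V → Bool) → ℝ, (∀ σ, 0 ≤ G σ) → ∀ σ, 0 ≤ A G σ)
    (G : (V → Bool) → ℝ) (hG : ∀ σ, 0 ≤ G σ) (σ : V → Bool) :
    0 ≤ NormedSpace.exp A G σ := by
  rw [exp_clm_apply]
  refine tsum_nonneg fun n => ?_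
  have hpow : ∀ n : ℕ, ∀ σ, 0 ≤ (A^n) G σ := by
    intro n
    induction n with
    | zero => simpa using hG
    | succ m ih =>
        intro σ
        rw [pow_succ', ContinuousLinearMap.mul_apply]
        exact hA _ ih σ
  exact mul_nonneg (by positivity) (hpow n σ)

lemma exp_clm_fixed (A : ((V → Bool) → ℝ) →L[ℝ] ((V → Bool) → ℝ))
    (G : (V → Bool) → ℝ) (hAG : A G = 0) :
    NormedSpace.exp A G = G := by
  funext σ
  rw [exp_clm_apply]
  rw [tsum_eq_single 0]
  · simp
  · intro n hn
    obtain ⟨m, rfl⟩ := Nat.exists_eq_succ_of_ne_zero hn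
    rw [pow_succ, ContinuousLinearMap.mul_apply, hAG]
    simp

lemma genCLM_const (c : V → (V → Bool) → ℝ) (r : ℝ) :
    genCLM c (fun _ => r) = 0 := by
  funext σ
  show gen c (fun _ => r) σ = 0
  unfold gen
  simp

lemma heatSG_const (c : V → (V → Bool) → ℝ) (t : ℝ) (r : ℝ) :
    heatSG c t (fun _ => r) = fun _ => r := by
  unfold heatSG
  apply exp_clm_fixed
  rw [ContinuousLinearMap.smul_apply, genCLM_const]
  simp

lemma heatSG_nonneg (c : V → (V → Bool) → ℝ) (hc : ∀ x σ, 0 ≤ c x σ)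
    (t : ℝ) (ht : 0 ≤ t) (G : (V → Bool) → ℝ) (hG : ∀ σ, 0 ≤ G σ) (σ : V → Bool) :
    0 ≤ heatSG c t G σ := by
  classical
  set K : ℝ := t * ∑ σ', ∑ x, c x σ' with hK_def
  have hK : ∀ σ', t * ∑ x, c x σ' ≤ K := by
    intro σ'
    refine mul_le_mul_of_nonneg_left ?_ ht
    exact Finset.single_le_sum (f := fun σ'' => ∑ x, c x σ'')
      (fun σ'' _ => Finset.sum_nonneg fun x _ => hc x σ'') (Finset.mem_univ σ')
  set B : ((V → Bool) → ℝ) →L[ℝ] ((V → Bool) → ℝ) := t • genCLM c + K • 1 with hB_def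
  have hB : ∀ G : (V → Bool) → ℝ, (∀ σ, 0 ≤ G σ) → ∀ σ, 0 ≤ B G σ := by
    intro G hG σ
    have hBG : B G σ = t * gen c G σ + K * G σ := by
      simp [hB_def, ContinuousLinearMap.add_apply, ContinuousLinearMap.smul_apply,
        ContinuousLinearMap.one_apply, genCLM_apply]
    rw [hBG]
    have hgen : t * gen c G σ = t * (∑ x, c x σ * G (flipC σ x)) - t * (∑ x, c x σ) * G σ := by
      unfold gen
      simp only [Finset.mul_sum, Finset.sum_mul, ← Finset.sum_sub_distrib]
      refine Finset.sum_congr rfl fun x _ => by ring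
    rw [hgen]
    have h1 : 0 ≤ t * ∑ x, c x σ * G (flipC σ x) := by
      refine mul_nonneg ht (Finset.sum_nonneg fun x _ => mul_nonneg (hc x σ) (hG _))
    have h2 : t * (∑ x, c x σ) * G σ ≤ K * G σ :=
      mul_le_mul_of_nonneg_right (hK σ) (hG σ)
    linarith
  set J : ((V → Bool) → ℝ) →L[ℝ] ((V → Bool) → ℝ) :=
    algebraMap ℝ (((V → Bool) → ℝ) →L[ℝ] ((V → Bool) → ℝ)) (-K) with hJ_def
  have hsplit : t • genCLM c = B + J := by
    rw [hJ_def, Algebra.algebraMap_eq_smul_one, hB_def, add_assoc, ← add_smul]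
    simp
  have hcomm : Commute B J := Algebra.commute_algebraMap_right (-K) B
  have hexp1 : NormedSpace.exp J
      = Real.exp (-K) • (1 : ((V → Bool) → ℝ) →L[ℝ] ((V → Bool) → ℝ)) := by
    rw [hJ_def, ← NormedSpace.algebraMap_exp_comm, Real.exp_eq_exp_ℝ,
      Algebra.algebraMap_eq_smul_one]
  have : heatSG c t G σ = Real.exp (-K) * NormedSpace.exp B G σ := by
    unfold heatSG
    letI : NormedAlgebra ℚ (((V → Bool) → ℝ) →L[ℝ] ((V → Bool) → ℝ)) :=
      NormedAlgebra.restrictScalars ℚ ℝ _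
    rw [hsplit, NormedSpace.exp_add_of_commute hcomm, hexp1]
    simp [ContinuousLinearMap.mul_apply, ContinuousLinearMap.smul_apply,
      ContinuousLinearMap.one_apply, map_smul]
  rw [this]
  exact mul_nonneg (Real.exp_pos _).le (exp_clm_nonneg B hB G hG σ)

lemma heatSG_zero (c : V → (V → Bool) → ℝ) (F : (V → Bool) → ℝ) : heatSG c 0 F = F := by
  unfold heatSG
  rw [zero_smul, NormedSpace.exp_zero]
  rfl

lemma heatSG_ge (c : V → (V → Bool) → ℝ) (hc : ∀ x σ, 0 ≤ c x σ)
    (t : ℝ) (ht : 0 ≤ t) (G : (V → Bool) → ℝ) (m : ℝ) (hGm : ∀ σ, m ≤ G σ) (σ : V → Bool) :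
    m ≤ heatSG c t G σ := by
  have h0 := heatSG_nonneg c hc t ht (fun σ => G σ - m) (fun σ => sub_nonneg.2 (hGm σ)) σ
  have hGsub : (fun σ => G σ - m) = G - (fun _ => m) := rfl
  rw [hGsub, map_sub] at h0
  have : (heatSG c t G - heatSG c t (fun _ => m)) σ
      = heatSG c t G σ - m := by
    rw [Pi.sub_apply, heatSG_const]
  rw [this] at h0
  linarith

lemma hasDerivAt_heatSG (c : V → (V → Bool) → ℝ) (F : (V → Bool) → ℝ) (σ : V → Bool) (t : ℝ) :
    HasDerivAt (fun s => heatSG c s F σ) (gen c (heatSG c t F) σ) t := by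
  have h := hasDerivAt_exp_smul_const' (𝕂 := ℝ) (genCLM c) t
  let Ψ : (((V → Bool) → ℝ) →L[ℝ] ((V → Bool) → ℝ)) →L[ℝ] ℝ :=
    (ContinuousLinearMap.proj σ).comp (ContinuousLinearMap.apply ℝ ((V → Bool) → ℝ) F)
  have h2 := Ψ.hasFDerivAt.comp_hasDerivAt t h
  exact h2

theorem entropy_decay_pos
    (μ : (V → Bool) → ℝ) (hμpos : ∀ σ, 0 < μ σ)
    (c : V → (V → Bool) → ℝ) (hcpos : ∀ x σ, 0 < c x σ)
    (hrev : ∀ x σ, c x σ * μ σ = c x (flipC σ x) * μ (flipC σ x))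
    (γ : ℝ) (hγ : 0 < γ)
    (hLSI : ∀ F : (V → Bool) → ℝ, (∀ σ, 0 ≤ F σ) →
      entropy μ F ≤ (2 / γ) * dirichlet μ c (fun σ => Real.sqrt (F σ)))
    (F : (V → Bool) → ℝ) (hFpos : ∀ σ, 0 < F σ) (t : ℝ) (ht : 0 ≤ t) :
    entropy μ (heatSG c t F) ≤ Real.exp (-γ * t) * entropy μ F := by
  classical
  have hne : Nonempty (V → Bool) := ⟨fun _ => true⟩
  set m : ℝ := Finset.univ.inf' Finset.univ_nonempty F with hm_def
  have hmF : ∀ σ, m ≤ F σ := fun σ => Finset.inf'_le F (Finset.mem_univ σ)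
  have hm : 0 < m := by
    obtain ⟨σ0, _, hσ0⟩ := Finset.exists_mem_eq_inf' Finset.univ_nonempty F
    rw [hm_def, hσ0]; exact hFpos σ0
  have hfpos : ∀ s, 0 ≤ s → ∀ σ, 0 < heatSG c s F σ := fun s hs σ =>
    lt_of_lt_of_le hm (heatSG_ge c (fun x σ => (hcpos x σ).le) s hs F m hmF σ)
  -- mean is constant
  have hdmean : ∀ s, HasDerivAt (fun u => Emean μ (heatSG c u F)) 0 s := by
    intro s
    have h := HasDerivAt.fun_sum (u := (Finset.univ : Finset (V → Bool)))
      (A := fun σ u => μ σ * heatSG c u F σ)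
      (A' := fun σ => μ σ * gen c (heatSG c s F) σ)
      (fun σ _ => ((hasDerivAt_heatSG c F σ s).const_mul (μ σ)))
    have hz : ∑ σ, μ σ * gen c (heatSG c s F) σ = 0 := Emean_gen_eq_zero μ c hrev _
    rw [hz] at h
    exact h
  have hmean : ∀ s, Emean μ (heatSG c s F) = Emean μ F := by
    intro s
    have h := is_const_of_deriv_eq_zero (fun u => (hdmean u).differentiableAt)
      (fun u => (hdmean u).deriv) s 0
    rw [h, heatSG_zero]
  set C : ℝ := Emean μ F with hC_def
  set K : ℝ := C * Real.log C with hK_def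
  set g : ℝ → ℝ := fun s => ∑ σ, μ σ * (heatSG c s F σ * Real.log (heatSG c s F σ)) with hg_def
  have hent : ∀ s, 0 ≤ s → entropy μ (heatSG c s F) = g s - K := by
    intro s _
    unfold entropy
    rw [hmean s]
    rfl
  set D : ℝ → ℝ := fun s =>
    ∑ σ, μ σ * ((Real.log (heatSG c s F σ) + 1) * gen c (heatSG c s F) σ) with hD_def
  have hgderiv : ∀ s, 0 < s → HasDerivAt g (D s) s := by
    intro s hs
    exact HasDerivAt.fun_sum (u := (Finset.univ : Finset (V → Bool)))
      (A := fun σ u => μ σ * (heatSG c u F σ * Real.log (heatSG c u F σ)))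
      (A' := fun σ => μ σ * ((Real.log (heatSG c s F σ) + 1) * gen c (heatSG c s F) σ))
      fun σ _ =>
      (((Real.hasDerivAt_mul_log (hfpos s hs.le σ).ne').comp (h₂ := fun x => x * Real.log x) s
        (hasDerivAt_heatSG c F σ s)).const_mul (μ σ))
  have hD_le : ∀ s, 0 < s → D s ≤ -γ * (g s - K) := by
    intro s hs
    have h1 : D s = Emean μ (fun σ => gen c (heatSG c s F) σ * Real.log (heatSG c s F σ))
        + Emean μ (gen c (heatSG c s F)) := by
      rw [hD_def]
      unfold Emean
      rw [← Finset.sum_add_distrib]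
      exact Finset.sum_congr rfl fun σ _ => by ring
    have h2 := gen_mul_log_le μ c hμpos hcpos hrev (heatSG c s F) (hfpos s hs.le)
    have h3 := Emean_gen_eq_zero μ c hrev (heatSG c s F)
    have h4 := hLSI (heatSG c s F) (fun σ => (hfpos s hs.le σ).le)
    rw [hent s hs.le] at h4
    have h5 : γ * (g s - K) ≤ 2 * dirichlet μ c (fun σ => Real.sqrt (heatSG c s F σ)) := by
      have := mul_le_mul_of_nonneg_left h4 hγ.le
      have heq : γ * ((2/γ) * dirichlet μ c (fun σ => Real.sqrt (heatSG c s F σ)))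
          = 2 * dirichlet μ c (fun σ => Real.sqrt (heatSG c s F σ)) := by
        field_simp
      linarith
    rw [h1, h3, add_zero]
    linarith
  set H : ℝ → ℝ := fun s => Real.exp (γ * s) * (g s - K) with hH_def
  have hgC : Continuous g := by
    apply continuous_finset_sum
    intro σ _
    exact continuous_const.mul (Real.continuous_mul_log.comp
      (Differentiable.continuous fun s => (hasDerivAt_heatSG c F σ s).differentiableAt))
  have hHd : ∀ s, 0 < s →
      HasDerivAt H (Real.exp (γ * s) * (γ * (g s - K) + D s)) s := by
    intro s hs
    have h0 : HasDerivAt (fun u : ℝ => γ * u) γ s := by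
      simpa using (hasDerivAt_id s).const_mul γ
    have he : HasDerivAt (fun u : ℝ => Real.exp (γ * u)) (Real.exp (γ * s) * γ) s :=
      (Real.hasDerivAt_exp (γ * s)).comp s h0
    have := he.mul ((hgderiv s hs).sub_const K)
    exact this.congr_deriv (by ring)
  have hH_anti : AntitoneOn H (Set.Icc 0 t) := by
    apply antitoneOn_of_deriv_nonpos (convex_Icc 0 t)
    · exact ((Real.continuous_exp.comp (continuous_const.mul continuous_id)).mul
        (hgC.sub continuous_const)).continuousOn
    · intro s hs
      rw [interior_Icc] at hs
      exact ((hHd s hs.1).differentiableAt).differentiableWithinAt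
    · intro s hs
      rw [interior_Icc] at hs
      rw [(hHd s hs.1).deriv]
      have := hD_le s hs.1
      have hexp := (Real.exp_pos (γ * s)).le
      nlinarith
  have hHt : H t ≤ H 0 := hH_anti (Set.left_mem_Icc.2 ht) (Set.right_mem_Icc.2 ht) ht
  have hH0 : H 0 = entropy μ F := by
    rw [hH_def]
    simp only [mul_zero, Real.exp_zero, one_mul]
    have : g 0 = Emean μ (fun σ => F σ * Real.log (F σ)) := by
      rw [hg_def]; simp only [heatSG_zero]; rfl
    rw [this]
    rfl
  have hfin : entropy μ (heatSG c t F) = Real.exp (-γ * t) * H t := by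
    rw [hent t ht, hH_def]
    rw [← mul_assoc, ← Real.exp_add]
    norm_num
  rw [hfin, ← hH0]
  exact mul_le_mul_of_nonneg_left hHt (Real.exp_pos _).le

end EntropyDecayAux

/-- **Exponential entropy decay** along the Glauber semigroup under a log-Sobolev
inequality with constant `γ`: `Ent_μ(P_t F) ≤ e^{−γt} Ent_μ(F)` for nonnegative `F`. -/
theorem entropy_exponential_decay
    {V : Type*} [Fintype V] [DecidableEq V]
    (μ : (V → Bool) → ℝ) (hμpos : ∀ σ, 0 < μ σ) (hμ1 : ∑ σ, μ σ = 1)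
    (c : V → (V → Bool) → ℝ) (hcpos : ∀ x σ, 0 < c x σ)
    (hrev : ∀ x σ, c x σ * μ σ = c x (flipC σ x) * μ (flipC σ x))
    (γ : ℝ) (hγ : 0 < γ)
    (hLSI : ∀ F : (V → Bool) → ℝ, (∀ σ, 0 ≤ F σ) →
      entropy μ F ≤ (2 / γ) * dirichlet μ c (fun σ => Real.sqrt (F σ)))
    (F : (V → Bool) → ℝ) (hF : ∀ σ, 0 ≤ F σ) (t : ℝ) (ht : 0 ≤ t) :
    entropy μ (heatSG c t F) ≤ Real.exp (-γ * t) * entropy μ F := by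
  classical
  have key : ∀ ε : ℝ, 0 < ε →
      entropy μ (fun σ => heatSG c t F σ + ε)
        ≤ Real.exp (-γ * t) * entropy μ (fun σ => F σ + ε) := by
    intro ε hε
    have h1 : heatSG c t (fun σ => F σ + ε) = fun σ => heatSG c t F σ + ε := by
      have h2 : (fun σ => F σ + ε) = F + (fun _ => ε) := rfl
      rw [h2, map_add, heatSG_const]
      rfl
    have h3 := entropy_decay_pos μ hμpos c hcpos hrev γ hγ hLSI (fun σ => F σ + ε)
      (fun σ => add_pos_of_nonneg_of_pos (hF σ) hε) t ht
    rw [h1] at h3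
    exact h3
  have hcontG : ∀ G : (V → Bool) → ℝ,
      Continuous (fun ε : ℝ => entropy μ (fun σ => G σ + ε)) := by
    intro G
    unfold entropy Emean
    apply Continuous.sub
    · apply continuous_finset_sum
      intro σ _
      exact continuous_const.mul
        (Real.continuous_mul_log.comp (continuous_const.add continuous_id))
    · exact Real.continuous_mul_log.comp
        (continuous_finset_sum _ fun σ _ =>
          continuous_const.mul (continuous_const.add continuous_id))
  have hT1 : Filter.Tendsto (fun ε : ℝ => entropy μ (fun σ => heatSG c t F σ + ε))
      (nhdsWithin 0 (Set.Ioi 0)) (nhds (entropy μ (heatSG c t F))) := by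
    have h := ((hcontG (heatSG c t F)).tendsto 0).mono_left (nhdsWithin_le_nhds (s := Set.Ioi (0:ℝ)))
    simpa using h
  have hT2 : Filter.Tendsto
      (fun ε : ℝ => Real.exp (-γ * t) * entropy μ (fun σ => F σ + ε))
      (nhdsWithin 0 (Set.Ioi 0)) (nhds (Real.exp (-γ * t) * entropy μ F)) := by
    have h := (((hcontG F).tendsto 0).mono_left (nhdsWithin_le_nhds (s := Set.Ioi (0:ℝ)))).const_mul
      (Real.exp (-γ * t))
    simpa using h
  exact le_of_tendsto_of_tendsto hT1 hT2
    (Filter.eventually_of_mem self_mem_nhdsWithin fun ε hε => key ε hε)
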